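/- arXiv:0912.1150 — 8 statements merged into one kernel-verified Lean document; each statement's English description precedes it below -/
import Mathlib

section
/- If P is a finite set of points in the plane that is not contained in a single line, then the visibility graph V(P) has diameter at most 2: for any two distinct points v, w in P, either v and w are visible with respect to P, or there exists a point u in P visible to both v and w. -/
/-- Two distinct points are visible w.r.t. `P` if no point of `P` lies strictly between them. -/
def Visible (P : Set (ℝ × ℝ)) (v w : ℝ × ℝ) : Prop :=
  v ≠ w ∧ ∀ p ∈ P, p ∉ openSegment ℝ v w

/-- The visibility graph of a finite non-collinear point set has diameter at most 2. -/
theorem visibility_graph_diameter_le_two (P : Finset (ℝ × ℝ))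
    (hP : ¬ Collinear ℝ (P : Set (ℝ × ℝ)))
    (v w : ℝ × ℝ) (hv : v ∈ P) (hw : w ∈ P) (hvw : v ≠ w) :
    Visible (P : Set (ℝ × ℝ)) v w ∨
      ∃ u ∈ P, u ≠ v ∧ u ≠ w ∧ Visible (P : Set (ℝ × ℝ)) u v ∧
        Visible (P : Set (ℝ × ℝ)) u w := by
  classical
  right
  set f : ℝ × ℝ → ℝ :=
    fun p => (w.1 - v.1) * (p.2 - v.2) - (w.2 - v.2) * (p.1 - v.1) with hf
  have hfv : f v = 0 := by simp [hf]
  have hfw : f w = 0 := by simp [hf]; ring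
  have haff : ∀ a b : ℝ, a + b = 1 → ∀ x y : ℝ × ℝ,
      f (a • x + b • y) = a * f x + b * f y := by
    intro a b hab x y
    have hb : b = 1 - a := by linarith
    subst hb
    simp only [hf, Prod.smul_fst, Prod.smul_snd, Prod.fst_add, Prod.snd_add,
      smul_eq_mul]
    ring
  -- there is a point of P off the line through v, w
  have hex : ∃ p ∈ P, f p ≠ 0 := by
    by_contra h
    push_neg at h
    apply hP
    rw [collinear_iff_of_mem (Finset.mem_coe.mpr hv)]
    refine ⟨w - v, fun p hp => ?_⟩
    rw [Finset.mem_coe] at hp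
    have hfp : f p = 0 := h p hp
    by_cases h1 : w.1 - v.1 ≠ 0
    · refine ⟨(p.1 - v.1) / (w.1 - v.1), ?_⟩
      have h2 : p.2 - v.2 = (p.1 - v.1) / (w.1 - v.1) * (w.2 - v.2) := by
        field_simp
        simp only [hf] at hfp
        linarith
      ext
      · simp only [Prod.fst_add, Prod.smul_fst, Prod.fst_sub, smul_eq_mul,
          Prod.fst_vadd, vadd_eq_add]
        field_simp
        ring
      · simp only [Prod.snd_add, Prod.smul_snd, Prod.snd_sub, smul_eq_mul,
          Prod.snd_vadd, vadd_eq_add]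
        linarith [h2]
    · push_neg at h1
      have h2 : w.2 - v.2 ≠ 0 := by
        intro h2
        apply hvw
        ext
        · linarith
        · linarith
      refine ⟨(p.2 - v.2) / (w.2 - v.2), ?_⟩
      have h3 : p.1 - v.1 = 0 := by
        simp only [hf, h1] at hfp
        have := mul_eq_zero.mp (by linarith : (w.2 - v.2) * (p.1 - v.1) = 0)
        tauto
      ext
      · simp only [Prod.fst_add, Prod.smul_fst, Prod.fst_sub, smul_eq_mul,
          Prod.fst_vadd, vadd_eq_add]
        rw [h1]
        linarith
      · simp only [Prod.snd_add, Prod.smul_snd, Prod.snd_sub, smul_eq_mul,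
          Prod.snd_vadd, vadd_eq_add]
        field_simp
        ring
  obtain ⟨u0, hu0P, hu0⟩ := hex
  -- pick a point off the line minimizing |f|
  have hS : (P.filter (fun p => f p ≠ 0)).Nonempty :=
    ⟨u0, Finset.mem_filter.mpr ⟨hu0P, hu0⟩⟩
  obtain ⟨u, huS, hmin⟩ :=
    (P.filter (fun p => f p ≠ 0)).exists_min_image (fun p => |f p|) hS
  obtain ⟨huP, hfu⟩ := Finset.mem_filter.mp huS
  have hune_v : u ≠ v := fun h => hfu (h ▸ hfv)
  have hune_w : u ≠ w := fun h => hfu (h ▸ hfw)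
  refine ⟨u, huP, hune_v, hune_w, ?_, ?_⟩
  all_goals {
    constructor
    · assumption
    · intro p hp hseg
      obtain ⟨a, b, ha, hb, hab, hz⟩ := hseg
      have hfp : f p = a * f u := by
        rw [← hz, haff a b hab]
        first
          | rw [hfv]; ring
          | rw [hfw]; ring
      have hfpne : f p ≠ 0 := by
        rw [hfp]
        exact mul_ne_zero (ne_of_gt ha) hfu
      have hmem : p ∈ P.filter (fun q => f q ≠ 0) := by
        simp only [Finset.mem_coe] at hp
        exact Finset.mem_filter.mpr ⟨hp, hfpne⟩
      have hle := hmin p hmem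
      have ha1 : a < 1 := by linarith
      have : |f p| = a * |f u| := by
        rw [hfp, abs_mul, abs_of_pos ha]
      rw [this] at hle
      nlinarith [abs_pos.mpr hfu]
  }
end

section
/- Let P be a finite set of n ≥ 3 points in general position in the plane (no three collinear), and let B be a set of points blocking P. Then |B| ≥ 2n - 3. -/
namespace BSLB

def cross (u w : ℝ × ℝ) : ℝ := u.1 * w.2 - u.2 * w.1

def inH (u : ℝ × ℝ) : Prop := 0 < u.2 ∨ (u.2 = 0 ∧ 0 < u.1)

noncomputable def key (u : ℝ × ℝ) : ℝ := -u.1 / Real.sqrt (u.1 ^ 2 + u.2 ^ 2)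

lemma sqrt_pos_of_inH {u : ℝ × ℝ} (h : inH u) : 0 < Real.sqrt (u.1 ^ 2 + u.2 ^ 2) := by
  apply Real.sqrt_pos.mpr
  rcases h with h | ⟨h2, h1⟩ <;> nlinarith

lemma main_ineq (a b c d R S : ℝ) (hb : 0 ≤ b) (hd : 0 ≤ d)
    (hb0 : b = 0 → 0 < a) (hd0 : d = 0 → 0 < c)
    (hR : 0 < R) (hS : 0 < S) (hR2 : R ^ 2 = a ^ 2 + b ^ 2) (hS2 : S ^ 2 = c ^ 2 + d ^ 2)
    (hcross : 0 < a * d - b * c) : c * R < a * S := by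
  rcases lt_trichotomy a 0 with ha | ha | ha
  · have hc : c < 0 := by nlinarith
    have had : a * d ≤ 0 := mul_nonpos_of_nonpos_of_nonneg ha.le hd
    have h4 : 0 < -(a * d + b * c) := by nlinarith
    have h3 : a ^ 2 * d ^ 2 < b ^ 2 * c ^ 2 := by nlinarith [mul_pos hcross h4]
    have h2 : a ^ 2 * S ^ 2 < c ^ 2 * R ^ 2 := by nlinarith
    nlinarith [mul_pos hS (neg_pos.2 ha), mul_pos hR (neg_pos.2 hc)]
  · have hbpos : 0 < b := by
      rcases hb.lt_or_eq with h | h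
      · exact h
      · exact absurd (hb0 h.symm) (by simp [ha])
    have hc : c < 0 := by nlinarith
    nlinarith [mul_pos hR (neg_pos.2 hc)]
  · rcases le_or_gt c 0 with hc | hc
    · have h1 : c * R ≤ 0 := mul_nonpos_of_nonpos_of_nonneg hc hR.le
      have h2 : 0 < a * S := mul_pos ha hS
      linarith
    · have hbc : 0 ≤ b * c := mul_nonneg hb hc.le
      have h4 : 0 < a * d + b * c := by nlinarith
      have h3 : b ^ 2 * c ^ 2 < a ^ 2 * d ^ 2 := by nlinarith [mul_pos hcross h4]
      have h2 : c ^ 2 * R ^ 2 < a ^ 2 * S ^ 2 := by nlinarith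
      nlinarith [mul_pos ha hS, mul_pos hc hR]

lemma key_lt_of_cross_pos {u w : ℝ × ℝ} (hu : inH u) (hw : inH w)
    (h : 0 < cross u w) : key u < key w := by
  have hR := sqrt_pos_of_inH hu
  have hS := sqrt_pos_of_inH hw
  rw [key, key, div_lt_div_iff₀ hR hS]
  have := main_ineq u.1 u.2 w.1 w.2 (Real.sqrt (u.1 ^ 2 + u.2 ^ 2)) (Real.sqrt (w.1 ^ 2 + w.2 ^ 2))
    (by rcases hu with h' | ⟨h', _⟩ <;> linarith) (by rcases hw with h' | ⟨h', _⟩ <;> linarith)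
    (fun h2 => by rcases hu with h' | ⟨_, h'⟩ <;> first | linarith | exact h')
    (fun h2 => by rcases hw with h' | ⟨_, h'⟩ <;> first | linarith | exact h')
    hR hS (Real.sq_sqrt (by positivity)) (Real.sq_sqrt (by positivity)) (by simpa [cross] using h)
  linarith

lemma cross_antisymm (u w : ℝ × ℝ) : cross w u = -cross u w := by simp [cross]; ring

lemma cross_pos_of_key_lt {u w : ℝ × ℝ} (hu : inH u) (hw : inH w)
    (hne : cross u w ≠ 0) (hlt : key u < key w) : 0 < cross u w := by
  rcases lt_trichotomy (cross u w) 0 with h | h | h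
  · have : 0 < cross w u := by rw [cross_antisymm]; linarith
    exact absurd (key_lt_of_cross_pos hw hu this) (by linarith)
  · exact absurd h hne
  · exact h

lemma key_smul {c : ℝ} (hc : 0 < c) (u : ℝ × ℝ) : key (c • u) = key u := by
  have h1 : (c • u).1 = c * u.1 := rfl
  have h2 : (c • u).2 = c * u.2 := rfl
  rw [key, key, h1, h2]
  have : (c * u.1) ^ 2 + (c * u.2) ^ 2 = c ^ 2 * (u.1 ^ 2 + u.2 ^ 2) := by ring
  rw [this, Real.sqrt_mul (sq_nonneg c), Real.sqrt_sq hc.le]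
  rcases ne_or_eq (Real.sqrt (u.1 ^ 2 + u.2 ^ 2)) 0 with hs | hs
  · field_simp
  · rw [hs, mul_zero, div_zero, div_zero]

lemma inH_combo {u w : ℝ × ℝ} {s t : ℝ} (hu : inH u) (hw : inH w)
    (hs : 0 < s) (ht : 0 < t) : inH (s • u + t • w) := by
  have h1 : (s • u + t • w).1 = s * u.1 + t * w.1 := rfl
  have h2 : (s • u + t • w).2 = s * u.2 + t * w.2 := rfl
  rcases hu with hu' | ⟨hu2, hu1⟩ <;> rcases hw with hw' | ⟨hw2, hw1⟩
  · left; rw [h2]; nlinarith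
  · left; rw [h2]; nlinarith
  · left; rw [h2]; nlinarith
  · right; rw [h1, h2, hu2, hw2]; constructor; ring; nlinarith

lemma collinear_of_cross_eq_zero {p q r : ℝ × ℝ} (hqp : q ≠ p)
    (h : cross (q - p) (r - p) = 0) : Collinear ℝ ({p, q, r} : Set (ℝ × ℝ)) := by
  rw [collinear_iff_of_mem (Set.mem_insert p {q, r})]
  refine ⟨q - p, ?_⟩
  intro x hx
  have hu : q - p ≠ 0 := sub_ne_zero.mpr hqp
  have e3 : (q - p).1 = q.1 - p.1 := rfl
  have e4 : (q - p).2 = q.2 - p.2 := rfl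
  rcases hx with hx | hx | hx
  · exact ⟨0, by simp [hx, vadd_eq_add]⟩
  · exact ⟨1, by simp [hx, vadd_eq_add]⟩
  · simp only [Set.mem_singleton_iff] at hx
    subst hx
    have e1 : (x - p).1 = x.1 - p.1 := rfl
    have e2 : (x - p).2 = x.2 - p.2 := rfl
    have h' : (q.1 - p.1) * (x.2 - p.2) = (q.2 - p.2) * (x.1 - p.1) := by
      have hh : (q - p).1 * (x - p).2 - (q - p).2 * (x - p).1 = 0 := h
      rw [e1, e2, e3, e4] at hh
      linarith
    have hAB : (q.1 - p.1) ≠ 0 ∨ (q.2 - p.2) ≠ 0 := by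
      by_contra hc
      push_neg at hc
      exact hu (Prod.ext (by rw [e3, hc.1]; rfl) (by rw [e4, hc.2]; rfl))
    rcases hAB with h1 | h1
    · refine ⟨(x.1 - p.1) / (q.1 - p.1), ?_⟩
      apply Prod.ext
      · simp only [vadd_eq_add, Prod.fst_add, Prod.smul_fst, smul_eq_mul, e3]
        field_simp
        ring
      · simp only [vadd_eq_add, Prod.snd_add, Prod.smul_snd, smul_eq_mul, e4]
        field_simp
        linear_combination h'
    · refine ⟨(x.2 - p.2) / (q.2 - p.2), ?_⟩
      apply Prod.ext
      · simp only [vadd_eq_add, Prod.fst_add, Prod.smul_fst, smul_eq_mul, e3]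
        field_simp
        linear_combination -h'
      · simp only [vadd_eq_add, Prod.snd_add, Prod.smul_snd, smul_eq_mul, e4]
        field_simp
        ring

end BSLB

/-- `B` blocks `P`: `B` is disjoint from `P` and every pair of distinct points of `P`
has a point of `B` strictly between them. -/
def Blocks (B P : Set (ℝ × ℝ)) : Prop :=
  Disjoint B P ∧ ∀ v ∈ P, ∀ w ∈ P, v ≠ w → ∃ b ∈ B, b ∈ openSegment ℝ v w

/-- A set of points is in general position if no three of its points are collinear. -/
def GenPos (P : Set (ℝ × ℝ)) : Prop :=
  ∀ p ∈ P, ∀ q ∈ P, ∀ r ∈ P, p ≠ q → p ≠ r → q ≠ r → ¬ Collinear ℝ {p, q, r}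

/-- Every blocking set of `n ≥ 3` points in general position has at least `2n - 3` points. -/
theorem blocking_set_lower_bound (n : ℕ) (hn : 3 ≤ n) (P B : Finset (ℝ × ℝ))
    (hcard : P.card = n) (hgp : GenPos (P : Set (ℝ × ℝ)))
    (hB : Blocks (B : Set (ℝ × ℝ)) (P : Set (ℝ × ℝ))) :
    2 * n - 3 ≤ B.card := by
  classical
  obtain ⟨hdisj, hblk⟩ := hB
  have hPne : P.Nonempty := Finset.card_pos.mp (by omega)
  obtain ⟨a₀, ha₀P, ha₀⟩ := P.exists_min_image (fun z => z.2) hPne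
  have hP2ne : (P.filter (fun z => z.2 = a₀.2)).Nonempty :=
    ⟨a₀, Finset.mem_filter.mpr ⟨ha₀P, rfl⟩⟩
  obtain ⟨p, hpF, hpmin⟩ :=
    (P.filter (fun z => z.2 = a₀.2)).exists_min_image (fun z => z.1) hP2ne
  have hpP : p ∈ P := (Finset.mem_filter.mp hpF).1
  have hp2 : p.2 = a₀.2 := (Finset.mem_filter.mp hpF).2
  -- all other points are in the upper half plane relative to p
  have hH : ∀ q ∈ P, q ≠ p → BSLB.inH (q - p) := by
    intro q hq hne
    have h2 : a₀.2 ≤ q.2 := ha₀ q hq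
    have e1 : (q - p).1 = q.1 - p.1 := rfl
    have e2 : (q - p).2 = q.2 - p.2 := rfl
    rcases eq_or_lt_of_le (show p.2 ≤ q.2 by rw [hp2]; exact h2) with h | h
    · right
      have hqF : q ∈ P.filter (fun z => z.2 = a₀.2) :=
        Finset.mem_filter.mpr ⟨hq, by rw [← h, hp2]⟩
      have h1 : p.1 ≤ q.1 := hpmin q hqF
      have h1' : p.1 ≠ q.1 := fun he => hne (Prod.ext he.symm h.symm)
      exact ⟨by rw [e2]; linarith, by rw [e1]; cases lt_or_eq_of_le h1 with
        | inl hlt => linarith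
        | inr heq => exact absurd heq h1'⟩
    · left; rw [e2]; linarith
  -- blocker chooser
  have hblk' : ∀ v w : ℝ × ℝ, v ∈ P → w ∈ P → v ≠ w →
      ∃ b, b ∈ B ∧ b ∈ openSegment ℝ v w := by
    intro v w hv hw hne
    obtain ⟨b, hb, hb2⟩ := hblk v (by exact_mod_cast hv) w (by exact_mod_cast hw) hne
    exact ⟨b, by exact_mod_cast hb, hb2⟩
  set bl : ℝ × ℝ → ℝ × ℝ → ℝ × ℝ := fun v w =>
    if h : v ∈ P ∧ w ∈ P ∧ v ≠ w then (hblk' v w h.1 h.2.1 h.2.2).choose else 0 with hbldef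
  have hbl : ∀ v w, v ∈ P → w ∈ P → v ≠ w →
      bl v w ∈ B ∧ bl v w ∈ openSegment ℝ v w := by
    intro v w h1 h2 h3
    have h : v ∈ P ∧ w ∈ P ∧ v ≠ w := ⟨h1, h2, h3⟩
    rw [hbldef]
    simp only [dif_pos h]
    exact (hblk' v w h.1 h.2.1 h.2.2).choose_spec
  set Q : Finset (ℝ × ℝ) := P.erase p with hQdef
  have hQcard : Q.card = n - 1 := by rw [hQdef, Finset.card_erase_of_mem hpP, hcard]
  set keyp : ℝ × ℝ → ℝ := fun q => BSLB.key (q - p) with hkeypdef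
  have hQP : ∀ q ∈ Q, q ∈ P ∧ q ≠ p := fun q hq =>
    ⟨Finset.mem_of_mem_erase hq, Finset.ne_of_mem_erase hq⟩
  have hcross0 : ∀ q ∈ Q, ∀ q' ∈ Q, q ≠ q' → BSLB.cross (q - p) (q' - p) ≠ 0 := by
    intro q hq q' hq' hne hc
    obtain ⟨hqP, hqp⟩ := hQP q hq
    obtain ⟨hq'P, hq'p⟩ := hQP q' hq'
    exact hgp p (by exact_mod_cast hpP) q (by exact_mod_cast hqP) q' (by exact_mod_cast hq'P)
      (Ne.symm hqp) (Ne.symm hq'p) hne (BSLB.collinear_of_cross_eq_zero hqp hc)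
  have hkeyinj : Set.InjOn keyp Q := by
    intro q hq q' hq' he
    by_contra hne
    have hc := hcross0 q hq q' hq' hne
    obtain ⟨hqP, hqp⟩ := hQP q hq
    obtain ⟨hq'P, hq'p⟩ := hQP q' hq'
    have hu := hH q hqP hqp
    have hw := hH q' hq'P hq'p
    rcases lt_trichotomy (BSLB.cross (q - p) (q' - p)) 0 with h | h | h
    · have h' : 0 < BSLB.cross (q' - p) (q - p) := by rw [BSLB.cross_antisymm]; linarith
      have := BSLB.key_lt_of_cross_pos hw hu h'
      simp only [hkeypdef] at he; linarith
    · exact hc h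
    · have := BSLB.key_lt_of_cross_pos hu hw h
      simp only [hkeypdef] at he; linarith
  set K : Finset ℝ := Q.image keyp with hKdef
  have hKcard : K.card = n - 1 := by
    rw [hKdef, Finset.card_image_of_injOn hkeyinj, hQcard]
  have hKne : K.Nonempty := Finset.card_pos.mp (by omega)
  set maxK := K.max' hKne with hmaxdef
  set pt : ℝ → ℝ × ℝ := fun k =>
    if h : k ∈ K then (Finset.mem_image.mp h).choose else 0 with hptdef
  have hptQ : ∀ k ∈ K, pt k ∈ Q ∧ keyp (pt k) = k := by
    intro k hk
    rw [hptdef]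
    simp only [dif_pos hk]
    exact (Finset.mem_image.mp hk).choose_spec
  set nxt : ℝ → ℝ := fun k =>
    if h : (K.filter (fun x => k < x)).Nonempty then (K.filter (fun x => k < x)).min' h
    else 0 with hnxtdef
  have hnxt : ∀ k ∈ K, k < maxK →
      nxt k ∈ K ∧ k < nxt k ∧ ∀ k' ∈ K, k < k' → nxt k ≤ k' := by
    intro k hk hklt
    have hne' : (K.filter (fun x => k < x)).Nonempty :=
      ⟨maxK, Finset.mem_filter.mpr ⟨K.max'_mem hKne, hklt⟩⟩
    rw [hnxtdef]
    simp only [dif_pos hne']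
    have h1 := (K.filter (fun x => k < x)).min'_mem hne'
    refine ⟨(Finset.mem_filter.mp h1).1, (Finset.mem_filter.mp h1).2, ?_⟩
    intro k' hk' hkk'
    exact Finset.min'_le _ _ (Finset.mem_filter.mpr ⟨hk', hkk'⟩)
  -- star blockers
  have hsb : ∀ k ∈ K, bl p (pt k) ∈ B ∧ keyp (bl p (pt k)) = k := by
    intro k hk
    obtain ⟨hq, hkeq⟩ := hptQ k hk
    obtain ⟨hqP, hqp⟩ := hQP _ hq
    obtain ⟨hbB, hbseg⟩ := hbl p (pt k) hpP hqP (Ne.symm hqp)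
    refine ⟨hbB, ?_⟩
    obtain ⟨s, t, hs, ht, hst, heq⟩ := hbseg
    have hz : bl p (pt k) - p = t • (pt k - p) := by
      rw [← heq, show s = 1 - t by linarith]
      module
    show BSLB.key (bl p (pt k) - p) = k
    rw [hz, BSLB.key_smul ht]
    exact hkeq
  -- consecutive blockers
  have hcb : ∀ k ∈ K, k < maxK →
      bl (pt k) (pt (nxt k)) ∈ B ∧ k < keyp (bl (pt k) (pt (nxt k))) ∧
        keyp (bl (pt k) (pt (nxt k))) < nxt k := by
    intro k hk hklt
    obtain ⟨hnK, hknxt, _⟩ := hnxt k hk hklt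
    obtain ⟨hq, hkeq⟩ := hptQ k hk
    obtain ⟨hq', hkeq'⟩ := hptQ (nxt k) hnK
    obtain ⟨hqP, hqp⟩ := hQP _ hq
    obtain ⟨hq'P, hq'p⟩ := hQP _ hq'
    have hqq' : pt k ≠ pt (nxt k) := by
      intro he
      rw [he, hkeq'] at hkeq
      exact absurd hkeq (ne_of_gt hknxt)
    obtain ⟨hbB, hbseg⟩ := hbl (pt k) (pt (nxt k)) hqP hq'P hqq'
    obtain ⟨s, t, hs, ht, hst, heq⟩ := hbseg
    have hu : BSLB.inH (pt k - p) := hH _ hqP hqp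
    have hw : BSLB.inH (pt (nxt k) - p) := hH _ hq'P hq'p
    have hzdef : bl (pt k) (pt (nxt k)) - p = s • (pt k - p) + t • (pt (nxt k) - p) := by
      rw [← heq, show s = 1 - t by linarith]
      module
    have hcuw : 0 < BSLB.cross (pt k - p) (pt (nxt k) - p) := by
      apply BSLB.cross_pos_of_key_lt hu hw (hcross0 _ hq _ hq' hqq')
      show BSLB.key (pt k - p) < BSLB.key (pt (nxt k) - p)
      rw [show BSLB.key (pt k - p) = keyp (pt k) from rfl,
        show BSLB.key (pt (nxt k) - p) = keyp (pt (nxt k)) from rfl, hkeq, hkeq']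
      exact hknxt
    have hz : BSLB.inH (s • (pt k - p) + t • (pt (nxt k) - p)) := BSLB.inH_combo hu hw hs ht
    have hcu : 0 < BSLB.cross (pt k - p) (s • (pt k - p) + t • (pt (nxt k) - p)) := by
      have he : BSLB.cross (pt k - p) (s • (pt k - p) + t • (pt (nxt k) - p)) =
          t * BSLB.cross (pt k - p) (pt (nxt k) - p) := by
        simp only [BSLB.cross, Prod.fst_add, Prod.snd_add, Prod.smul_fst, Prod.smul_snd,
          smul_eq_mul]
        ring
      rw [he]; positivity
    have hcw : 0 < BSLB.cross (s • (pt k - p) + t • (pt (nxt k) - p)) (pt (nxt k) - p) := by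
      have he : BSLB.cross (s • (pt k - p) + t • (pt (nxt k) - p)) (pt (nxt k) - p) =
          s * BSLB.cross (pt k - p) (pt (nxt k) - p) := by
        simp only [BSLB.cross, Prod.fst_add, Prod.snd_add, Prod.smul_fst, Prod.smul_snd,
          smul_eq_mul]
        ring
      rw [he]; positivity
    refine ⟨hbB, ?_, ?_⟩
    · have h1 := BSLB.key_lt_of_cross_pos hu hz hcu
      rw [← hzdef] at h1
      have hkeq2 : BSLB.key (pt k - p) = k := hkeq
      rw [hkeq2] at h1
      exact h1
    · have h1 := BSLB.key_lt_of_cross_pos hz hw hcw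
      rw [← hzdef] at h1
      have hkeq2 : BSLB.key (pt (nxt k) - p) = nxt k := hkeq'
      rw [hkeq2] at h1
      exact h1
  -- the two finsets of blockers
  set S : Finset (ℝ × ℝ) := K.image (fun k => bl p (pt k)) with hSdef
  set Kc : Finset ℝ := K.filter (fun k => k < maxK) with hKcdef
  set C : Finset (ℝ × ℝ) := Kc.image (fun k => bl (pt k) (pt (nxt k))) with hCdef
  have hKcmem : ∀ k ∈ Kc, k ∈ K ∧ k < maxK := fun k hk =>
    ⟨(Finset.mem_filter.mp hk).1, (Finset.mem_filter.mp hk).2⟩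
  have hScard : S.card = n - 1 := by
    rw [hSdef, Finset.card_image_of_injOn, hKcard]
    intro k1 h1 k2 h2 he
    have he' : bl p (pt k1) = bl p (pt k2) := he
    have e1 := (hsb k1 h1).2
    have e2 := (hsb k2 h2).2
    rw [he', e2] at e1
    exact e1.symm
  have hKccard : Kc.card = n - 2 := by
    have : Kc = K.erase maxK := by
      ext k
      simp only [hKcdef, Finset.mem_filter, Finset.mem_erase]
      constructor
      · rintro ⟨h1, h2⟩; exact ⟨ne_of_lt h2, h1⟩
      · rintro ⟨h1, h2⟩; exact ⟨h2, lt_of_le_of_ne (K.le_max' k h2) h1⟩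
    rw [this, Finset.card_erase_of_mem (K.max'_mem hKne), hKcard]
    omega
  have hCcard : C.card = n - 2 := by
    rw [hCdef, Finset.card_image_of_injOn, hKccard]
    intro k1 h1 k2 h2 he
    have he' : bl (pt k1) (pt (nxt k1)) = bl (pt k2) (pt (nxt k2)) := he
    obtain ⟨h1K, h1lt⟩ := hKcmem k1 h1
    obtain ⟨h2K, h2lt⟩ := hKcmem k2 h2
    by_contra hne
    rcases lt_or_gt_of_ne hne with hlt | hlt
    · have := (hnxt k1 h1K h1lt).2.2 k2 h2K hlt
      have a1 := (hcb k1 h1K h1lt).2.2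
      have a2 := (hcb k2 h2K h2lt).2.1
      rw [he'] at a1
      linarith
    · have := (hnxt k2 h2K h2lt).2.2 k1 h1K hlt
      have a1 := (hcb k2 h2K h2lt).2.2
      have a2 := (hcb k1 h1K h1lt).2.1
      rw [he'] at a2
      linarith
  have hdisjSC : Disjoint S C := by
    rw [Finset.disjoint_left]
    intro x hxS hxC
    rw [hSdef, Finset.mem_image] at hxS
    rw [hCdef, Finset.mem_image] at hxC
    obtain ⟨k1, hk1, he1⟩ := hxS
    obtain ⟨k2, hk2, he2⟩ := hxC
    obtain ⟨h2K, h2lt⟩ := hKcmem k2 hk2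
    have e1 := (hsb k1 hk1).2
    have a1 := (hcb k2 h2K h2lt).2.1
    have a2 := (hcb k2 h2K h2lt).2.2
    rw [he2] at a1 a2
    rw [← he1, e1] at a1 a2
    have := (hnxt k2 h2K h2lt).2.2 k1 hk1 a1
    linarith
  have hSB : S ⊆ B := by
    intro x hx
    rw [hSdef, Finset.mem_image] at hx
    obtain ⟨k, hk, he⟩ := hx
    rw [← he]; exact (hsb k hk).1
  have hCB : C ⊆ B := by
    intro x hx
    rw [hCdef, Finset.mem_image] at hx
    obtain ⟨k, hk, he⟩ := hx
    obtain ⟨hkK, hklt⟩ := hKcmem k hk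
    rw [← he]; exact (hcb k hkK hklt).1
  have hunion : (S ∪ C).card ≤ B.card :=
    Finset.card_le_card (Finset.union_subset hSB hCB)
  rw [Finset.card_union_of_disjoint hdisjSC, hScard, hCcard] at hunion
  omega
end

section
/- Let n ≥ 1 and place v_i = (-2^i, 2^{2i}) and w_j = (2^j, 2^{2j}) for i, j ∈ {1,...,n}. Then the point (0, 2^{i+j}) lies in the open segment from v_i to w_j for all i, j, so the set {(0, 2^k) : k ∈ {2,...,2n}} of 2n - 1 points blocks this geometric drawing of K_{n,n}. Moreover the 2n points v_1,...,v_n, w_1,...,w_n are in general position (no three collinear). -/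
open Finset

lemma seg_key (i j : ℕ) :
    ((0 : ℝ), (2 : ℝ) ^ (i + j)) ∈
      openSegment ℝ ((-(2:ℝ)^i, (2:ℝ)^(2*i)) : ℝ × ℝ) (((2:ℝ)^j, (2:ℝ)^(2*j)) : ℝ × ℝ) := by
  have hi : (0:ℝ) < 2^i := by positivity
  have hj : (0:ℝ) < 2^j := by positivity
  have hs : (0:ℝ) < 2^i + 2^j := by positivity
  refine ⟨(2:ℝ)^j / ((2:ℝ)^i + (2:ℝ)^j), (2:ℝ)^i / ((2:ℝ)^i + (2:ℝ)^j),
    by positivity, by positivity, by field_simp; ring, ?_⟩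
  have h2i : (2:ℝ)^(2*i) = (2:ℝ)^i * (2:ℝ)^i := by rw [two_mul, pow_add]
  have h2j : (2:ℝ)^(2*j) = (2:ℝ)^j * (2:ℝ)^j := by rw [two_mul, pow_add]
  have hij : (2:ℝ)^(i+j) = (2:ℝ)^i * (2:ℝ)^j := by rw [pow_add]
  simp only [Prod.smul_mk, smul_eq_mul, Prod.mk_add_mk, Prod.mk.injEq]
  constructor
  · field_simp; ring
  · rw [h2i, h2j, hij]; field_simp

lemma parab_ncol (p q r : ℝ × ℝ) (hp : p.2 = p.1 ^ 2) (hq : q.2 = q.1 ^ 2)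
    (hr : r.2 = r.1 ^ 2) (hpq : p ≠ q) (hpr : p ≠ r) (hqr : q ≠ r) :
    ¬ Collinear ℝ ({p, q, r} : Set (ℝ × ℝ)) := by
  intro hcol
  rw [collinear_iff_of_mem (Set.mem_insert p {q, r})] at hcol
  obtain ⟨d, hd⟩ := hcol
  obtain ⟨cq, hcq⟩ := hd q (by simp)
  obtain ⟨cr, hcr⟩ := hd r (by simp)
  have hcq0 : cq ≠ 0 := by rintro rfl; simp at hcq; exact hpq hcq.symm
  have hcr0 : cr ≠ 0 := by rintro rfl; simp at hcr; exact hpr hcr.symm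
  have hqr' : cq ≠ cr := by rintro rfl; exact hqr (hcq.trans hcr.symm)
  have hq1 : q.1 = p.1 + cq * d.1 := by rw [hcq]; simp; ring
  have hq2 : q.2 = p.2 + cq * d.2 := by rw [hcq]; simp; ring
  have hr1 : r.1 = p.1 + cr * d.1 := by rw [hcr]; simp; ring
  have hr2 : r.2 = p.2 + cr * d.2 := by rw [hcr]; simp; ring
  have e1 : cq * d.2 = 2 * p.1 * (cq * d.1) + (cq * d.1)^2 := by
    have := hq2; rw [hq, hq1, hp] at this; ring_nf at this ⊢; linarith [this]
  have e2 : cr * d.2 = 2 * p.1 * (cr * d.1) + (cr * d.1)^2 := by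
    have := hr2; rw [hr, hr1, hp] at this; ring_nf at this ⊢; linarith [this]
  have hd1 : d.1 = 0 := by
    by_contra h
    have f1 : d.2 = 2 * p.1 * d.1 + cq * d.1^2 := by
      field_simp at e1 ⊢
      have := mul_left_cancel₀ hcq0 (by linear_combination cq * e1 : cq * (d.2) = cq * (2 * p.1 * d.1 + cq * d.1^2))
      linarith [this]
    have f2 : d.2 = 2 * p.1 * d.1 + cr * d.1^2 := by
      have := mul_left_cancel₀ hcr0 (by linarith [e2] : cr * (d.2) = cr * (2 * p.1 * d.1 + cr * d.1^2))
      linarith [this]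
    have : cq * d.1^2 = cr * d.1^2 := by linarith
    exact hqr' (mul_right_cancel₀ (pow_ne_zero 2 h) this)
  have hd2 : d.2 = 0 := by
    have : cq * d.2 = 0 := by rw [e1, hd1]; ring
    exact (mul_eq_zero.1 this).resolve_left hcq0
  apply hpq
  rw [hcq]
  have : d = 0 := Prod.ext hd1 hd2
  simp [this]
/-- Parabola drawing of `K_{n,n}`: `v i = (-2^i, 2^(2i))`, `w j = (2^j, 2^(2j))`.
The point `(0, 2^(i+j))` blocks edge `v i w j`; the `2n - 1` points `(0, 2^k)`,
`k ∈ {2, …, 2n}`, block the drawing and are not vertices; moreover the `2n` vertices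
are in general position. -/
theorem parabola_Knn_blocked (n : ℕ) (hn : 1 ≤ n)
    (v w : ℕ → ℝ × ℝ)
    (hv : ∀ i, v i = (-(2 : ℝ) ^ i, (2 : ℝ) ^ (2 * i)))
    (hw : ∀ j, w j = ((2 : ℝ) ^ j, (2 : ℝ) ^ (2 * j)))
    (B : Finset (ℝ × ℝ))
    (hB : B = (Finset.Icc 2 (2 * n)).image (fun k : ℕ => ((0 : ℝ), (2 : ℝ) ^ k))) :
    (∀ i ∈ Finset.Icc 1 n, ∀ j ∈ Finset.Icc 1 n,
      ((0 : ℝ), (2 : ℝ) ^ (i + j)) ∈ openSegment ℝ (v i) (w j)) ∧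
    B.card = 2 * n - 1 ∧
    (∀ b ∈ B, ∀ i ∈ Finset.Icc 1 n, b ≠ v i ∧ b ≠ w i) ∧
    (∀ i ∈ Finset.Icc 1 n, ∀ j ∈ Finset.Icc 1 n,
      ∃ b ∈ B, b ∈ openSegment ℝ (v i) (w j)) ∧
    (∀ p ∈ (Finset.Icc 1 n).image v ∪ (Finset.Icc 1 n).image w,
     ∀ q ∈ (Finset.Icc 1 n).image v ∪ (Finset.Icc 1 n).image w,
     ∀ r ∈ (Finset.Icc 1 n).image v ∪ (Finset.Icc 1 n).image w,
      p ≠ q → p ≠ r → q ≠ r → ¬ Collinear ℝ {p, q, r}) := by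
  have hseg : ∀ i j : ℕ, ((0 : ℝ), (2 : ℝ) ^ (i + j)) ∈ openSegment ℝ (v i) (w j) := by
    intro i j; rw [hv, hw]; exact seg_key i j
  have hinj : Function.Injective (fun k : ℕ => ((0 : ℝ), (2 : ℝ) ^ k)) := by
    intro a b h
    simp only [Prod.mk.injEq, true_and] at h
    exact Nat.pow_right_injective (le_refl 2) (by exact_mod_cast h)
  have hparab : ∀ p ∈ (Finset.Icc 1 n).image v ∪ (Finset.Icc 1 n).image w,
      p.2 = p.1 ^ 2 := by
    intro p hp
    rcases Finset.mem_union.1 hp with h | h <;>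
      obtain ⟨i, _, rfl⟩ := Finset.mem_image.1 h
    · rw [hv]; simp [two_mul, pow_add]; ring
    · rw [hw]; simp [two_mul, pow_add]; ring
  refine ⟨fun i _ j _ => hseg i j, ?_, ?_, ?_, ?_⟩
  · rw [hB, Finset.card_image_of_injective _ hinj, Nat.card_Icc]; omega
  · intro b hb i hi
    rw [hB] at hb
    obtain ⟨k, _, rfl⟩ := Finset.mem_image.1 hb
    have h2i : (0:ℝ) < 2 ^ i := by positivity
    constructor
    · intro h; rw [hv] at h
      have := congrArg Prod.fst h; simp at this
    · intro h; rw [hw] at h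
      have := congrArg Prod.fst h; simp at this; linarith
  · intro i hi j hj
    refine ⟨((0 : ℝ), (2 : ℝ) ^ (i + j)), ?_, hseg i j⟩
    rw [hB]
    refine Finset.mem_image.2 ⟨i + j, Finset.mem_Icc.2 ?_, rfl⟩
    simp only [Finset.mem_Icc] at hi hj
    omega
  · intro p hp q hq r hr hpq hpr hqr
    exact parab_ncol p q r (hparab p hp) (hparab q hq) (hparab r hr) hpq hpr hqr
end

section
/- Let S = {s_1, ..., s_n} be a set of n positive reals, and place v_i = (-s_i, s_i²) and w_j = (s_j, s_j²). Then the straight segment from v_i to w_j crosses the y-axis exactly at the point (0, s_i · s_j). Consequently the point set {(0, p) : p ∈ S·S} blocks all edges v_i w_j, so this drawing of K_{n,n} can be blocked by |S·S| points, where S·S := {ab : a, b ∈ S}. -/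
open Finset Pointwise

lemma parabola_cross (a b : ℝ) (ha : 0 < a) (hb : 0 < b) :
    ((0 : ℝ), a * b) ∈ openSegment ℝ ((-a, a ^ 2) : ℝ × ℝ) (b, b ^ 2) := by
  have hab : 0 < a + b := by linarith
  refine ⟨b / (a + b), a / (a + b), div_pos hb hab, div_pos ha hab, ?_, ?_⟩
  · field_simp
    ring
  · ext
    · simp only [Prod.smul_mk, Prod.fst_add, smul_eq_mul]
      field_simp
      ring
    · simp only [Prod.smul_mk, Prod.snd_add, smul_eq_mul]
      field_simp

/-- Drawing `K_{n,n}` on the parabola using a set `S` of positive reals: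
the edge from `(-a, a²)` to `(b, b²)` crosses the y-axis exactly at `(0, ab)`,
so the points `{(0, p) : p ∈ S·S}` (none of which is a vertex) block all edges. -/
theorem parabola_product_set_blocks (S : Finset ℝ) (hpos : ∀ a ∈ S, 0 < a) :
    (∀ a ∈ S, ∀ b ∈ S,
      ((0 : ℝ), a * b) ∈ openSegment ℝ (-a, a ^ 2) (b, b ^ 2) ∧
      ∀ y : ℝ, ((0 : ℝ), y) ∈ openSegment ℝ (-a, a ^ 2) (b, b ^ 2) → y = a * b) ∧
    (∀ p ∈ S * S, ∀ a ∈ S, ((0 : ℝ), p) ≠ (-a, a ^ 2) ∧ ((0 : ℝ), p) ≠ (a, a ^ 2)) ∧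
    (∀ a ∈ S, ∀ b ∈ S,
      ∃ p ∈ S * S, ((0 : ℝ), p) ∈ openSegment ℝ (-a, a ^ 2) (b, b ^ 2)) := by
  refine ⟨fun a ha b hb => ⟨parabola_cross a b (hpos a ha) (hpos b hb), ?_⟩,
    fun p hp a ha => ?_, fun a ha b hb =>
      ⟨a * b, mul_mem_mul ha hb, parabola_cross a b (hpos a ha) (hpos b hb)⟩⟩
  · rintro y ⟨t, s, ht, hs, hts, heq⟩
    have ha' := hpos a ha
    have hb' := hpos b hb
    have h1 : t * (-a) + s * b = 0 := congrArg Prod.fst heq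
    have h2 : t * a ^ 2 + s * b ^ 2 = y := congrArg Prod.snd heq
    have hab : 0 < a + b := by linarith
    have hT : t = b / (a + b) := by
      have : t * (a + b) = b := by nlinarith
      field_simp at this ⊢
      linarith
    have hS : s = a / (a + b) := by
      have : s * (a + b) = a := by nlinarith
      field_simp at this ⊢
      linarith
    subst hT hS
    rw [← h2]
    field_simp
  · obtain ⟨x, hx, y, hy, rfl⟩ := Finset.mem_mul.mp hp
    have := hpos a ha
    constructor <;> intro h <;> have := congrArg Prod.fst h <;> simp at this <;> linarith
end

section
/- Every set B that blocks a simple (or geometric) drawing of the complete graph K_n (n ≥ 2) satisfies |B| ≥ n - 1, since each blocking point can block at most ⌊n/2⌋ edges. -/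
lemma uniq_partner {v w w' b : ℝ × ℝ}
    (hcol : w ≠ w' → ¬ Collinear ℝ {v, w, w'})
    (h1 : b ∈ openSegment ℝ v w) (h2 : b ∈ openSegment ℝ v w') : w = w' := by
  by_contra hne
  apply hcol hne
  obtain ⟨a1, a2, ha1, ha2, has, hb⟩ := h1
  obtain ⟨c1, c2, hc1, hc2, hcs, hb'⟩ := h2
  have e1 : b - v = a2 • (w - v) := by
    have : a1 = 1 - a2 := by linarith
    subst this; rw [← hb]; module
  have e2 : b - v = c2 • (w' - v) := by
    have : c1 = 1 - c2 := by linarith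
    subst this; rw [← hb']; module
  rw [collinear_iff_of_mem (Set.mem_insert v {w, w'})]
  refine ⟨w - v, fun p hp => ?_⟩
  rcases hp with rfl | rfl | rfl
  · exact ⟨0, by simp⟩
  · exact ⟨1, by simp⟩
  · refine ⟨c2⁻¹ * a2, ?_⟩
    have h3 : c2 • (p - v) = a2 • (w - v) := by rw [← e2, e1]
    have h4 : p - v = (c2⁻¹ * a2) • (w - v) := by
      rw [mul_smul, ← h3, inv_smul_smul₀ (ne_of_gt hc2)]
    have : p = (c2⁻¹ * a2) • (w - v) + v := by
      rw [← h4]; abel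
    simpa using this

/-- Any set blocking a simple geometric drawing of `K_n` (`n ≥ 2`, vertices in general
position so that any two edges intersect at most once) has at least `n - 1` points,
since each point blocks at most `⌊n/2⌋` edges. -/
theorem blockers_at_least_n_sub_one (n : ℕ) (hn : 2 ≤ n) (P B : Finset (ℝ × ℝ))
    (hcard : P.card = n) (hgp : GenPos (P : Set (ℝ × ℝ)))
    (hB : Blocks (B : Set (ℝ × ℝ)) (P : Set (ℝ × ℝ))) :
    n - 1 ≤ B.card := by
  classical
  obtain ⟨hdisj, hblock⟩ := hB
  set S := P.offDiag with hS
  have hSf : ∀ p ∈ S, ∃ b, b ∈ B ∧ b ∈ openSegment ℝ p.1 p.2 := by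
    intro p hp
    rw [Finset.mem_offDiag] at hp
    obtain ⟨b, hb1, hb2⟩ := hblock p.1 (by exact_mod_cast hp.1) p.2
      (by exact_mod_cast hp.2.1) hp.2.2
    exact ⟨b, by exact_mod_cast hb1, hb2⟩
  choose! f hfB hfseg using hSf
  have hsum : S.card = ∑ b ∈ B, (S.filter (fun p => f p = b)).card :=
    Finset.card_eq_sum_card_fiberwise hfB
  have hfiber : ∀ b ∈ B, (S.filter (fun p => f p = b)).card ≤ n := by
    intro b hb
    rw [← hcard]
    apply Finset.card_le_card_of_injOn Prod.fst
    · intro p hp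
      rw [Finset.mem_coe, Finset.mem_filter] at hp
      exact (Finset.mem_offDiag.mp hp.1).1
    · intro p hp q hq hpq
      rw [Finset.mem_coe, Finset.mem_filter] at hp hq
      obtain ⟨hpS, hpf⟩ := hp
      obtain ⟨hqS, hqf⟩ := hq
      have hpS' := Finset.mem_offDiag.mp hpS
      have hqS' := Finset.mem_offDiag.mp hqS
      have hseg1 := hfseg p hpS
      have hseg2 := hfseg q hqS
      rw [hpf] at hseg1
      rw [hqf] at hseg2
      rw [← hpq] at hseg2
      have h2 : p.2 = q.2 := by
        apply uniq_partner (v := p.1) (b := b) ?_ hseg1 hseg2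
        intro hne
        refine hgp p.1 (by exact_mod_cast hpS'.1) p.2 (by exact_mod_cast hpS'.2.1)
          q.2 (by exact_mod_cast hqS'.2.1) hpS'.2.2 ?_ hne
        rw [hpq]; exact hqS'.2.2
      exact Prod.ext hpq h2
  have hbound : S.card ≤ B.card * n := by
    rw [hsum]
    calc ∑ b ∈ B, (S.filter (fun p => f p = b)).card
        ≤ ∑ _b ∈ B, n := Finset.sum_le_sum hfiber
      _ = B.card * n := by rw [Finset.sum_const, smul_eq_mul]
  have hScard : S.card = n * n - n := by
    rw [hS, Finset.offDiag_card, hcard]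
  have hnn : n * (n - 1) ≤ B.card * n := by
    have : n * (n - 1) = n * n - n := by
      rw [Nat.mul_sub, Nat.mul_one]
    omega
  have hpos : 0 < n := by omega
  exact Nat.le_of_mul_le_mul_left (by rw [Nat.mul_comm B.card n] at hnn; exact hnn) hpos
end

section
/- Let P be a set of n points in general position in the plane, and let B block P. If T is any triangulation of P (a maximal set of pairwise non-crossing open segments between points of P), then distinct edges of T require distinct blockers, hence |B| ≥ |T|. -/
open Finset

/-- If `T` is a set of edges between points of `P` (in general position) whose open
segments are pairwise disjoint — e.g. the edges of a triangulation of `P` — then any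
blocking set `B` of `P` satisfies `|B| ≥ |T|`, since distinct edges need distinct
blockers. -/
theorem triangulation_blocking_lower_bound (P B : Finset (ℝ × ℝ))
    (hgp : GenPos (P : Set (ℝ × ℝ)))
    (hB : Blocks (B : Set (ℝ × ℝ)) (P : Set (ℝ × ℝ)))
    (T : Finset ((ℝ × ℝ) × (ℝ × ℝ)))
    (hT : ∀ e ∈ T, e.1 ∈ P ∧ e.2 ∈ P ∧ e.1 ≠ e.2)
    (hdisj : ∀ e ∈ T, ∀ f ∈ T, e ≠ f →
      Disjoint (openSegment ℝ e.1 e.2) (openSegment ℝ f.1 f.2)) :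
    T.card ≤ B.card := by
  have hchoice : ∀ e ∈ T, ∃ b ∈ B, b ∈ openSegment ℝ e.1 e.2 := by
    intro e he
    obtain ⟨h1, h2, h3⟩ := hT e he
    exact hB.2 e.1 h1 e.2 h2 h3
  choose f hfB hfseg using hchoice
  apply Finset.card_le_card_of_injOn (fun e => if h : e ∈ T then f e h else e.1)
  · intro e he
    simp only [Finset.mem_coe] at he ⊢
    rw [dif_pos he]
    exact hfB e he
  · intro e he f' hf' hef
    simp only [Finset.mem_coe] at he hf'
    simp only [dif_pos he, dif_pos hf'] at hef
    by_contra hne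
    exact (hdisj e he f' hf' hne).ne_of_mem (hfseg e he)
      (hef ▸ hfseg f' hf') rfl
end

section
/- For the point set P = {(-2^i, 2^{2i}) : 1 ≤ i ≤ n} ∪ {(2^i, 2^{2i}) : 1 ≤ i ≤ n} in convex position, for each k with 2 ≤ k ≤ 2n, the point (0, 2^k) blocks every segment from (-2^i, 2^{2i}) to (2^j, 2^{2j}) with i + j = k; in particular there exist Ω(n) points each blocking Ω(n) of the segments of P. -/
open Finset

/-- For the convex-position point set `{(-2^i, 2^(2i))} ∪ {(2^i, 2^(2i))}`, the point
`(0, 2^k)` blocks every segment from `(-2^i, 2^(2i))` to `(2^j, 2^(2j))` with `i + j = k`;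
in particular there are at least `n/2` values of `k` for which `(0, 2^k)` blocks at
least `n/2` of the segments. -/
theorem parabola_point_blocks_many (n : ℕ) :
    (∀ k ∈ Finset.Icc 2 (2 * n), ∀ i ∈ Finset.Icc 1 n, ∀ j ∈ Finset.Icc 1 n,
      i + j = k →
      ((0 : ℝ), (2 : ℝ) ^ k) ∈
        openSegment ℝ (-(2 : ℝ) ^ i, (2 : ℝ) ^ (2 * i)) ((2 : ℝ) ^ j, (2 : ℝ) ^ (2 * j))) ∧
    (∃ K ⊆ Finset.Icc 2 (2 * n), n / 2 ≤ K.card ∧ ∀ k ∈ K,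
      n / 2 ≤ ((Finset.Icc 1 n ×ˢ Finset.Icc 1 n).filter
        (fun p => p.1 + p.2 = k)).card) := by
  constructor
  · intro k hk i hi j hj hij
    have hpos : (0:ℝ) < 2^i + 2^j := by positivity
    refine ⟨2^j/(2^i+2^j), 2^i/(2^i+2^j), by positivity, by positivity,
      by field_simp; ring, ?_⟩
    subst hij
    ext
    · show (2:ℝ)^j/(2^i+2^j) * (-(2:ℝ)^i) + 2^i/(2^i+2^j) * 2^j = 0
      field_simp
      ring
    · show (2:ℝ)^j/(2^i+2^j) * (2:ℝ)^(2*i) + 2^i/(2^i+2^j) * 2^(2*j) = 2^(i+j)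
      rw [div_mul_eq_mul_div, div_mul_eq_mul_div, ← add_div, div_eq_iff hpos.ne']
      rw [two_mul, two_mul, pow_add, pow_add, pow_add]
      ring
  · rcases Nat.lt_or_ge n 2 with h | h
    · refine ⟨∅, by simp, by interval_cases n <;> simp, by simp⟩
    · refine ⟨Finset.Icc (n/2+1) (n+1), ?_, ?_, ?_⟩
      · intro k hk
        simp only [mem_Icc] at *
        omega
      · rw [Nat.card_Icc]; omega
      · intro k hk
        simp only [mem_Icc] at hk
        have : (Finset.Icc 1 (n/2)).card ≤ ((Finset.Icc 1 n ×ˢ Finset.Icc 1 n).filter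
            (fun p => p.1 + p.2 = k)).card := by
          apply Finset.card_le_card_of_injOn (fun i => (i, k - i))
          · intro i hi
            simp only [mem_Icc, mem_filter, mem_product, Finset.mem_coe] at *
            omega
          · intro a _ b _ hab
            exact (Prod.mk.injEq _ _ _ _).mp hab |>.1
        rw [Nat.card_Icc] at this
        omega
end

section
/- There exists a simple (non-geometric) drawing of K_n in the plane that can be blocked by 2n - 3 points: place vertex v_i at (i, 0), route edge v_i v_j (i < j) through the point (-i-j, 0), and take the blockers {(-k, 0) : 3 ≤ k ≤ 2n - 1}; each of these 2n - 3 points blocks all edges v_i v_j with i + j = k. -/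
open Finset

noncomputable def arc (p q s : ℝ) : Path ((p, 0) : ℝ × ℝ) ((q, 0) : ℝ × ℝ) where
  toFun t := ((p + q) / 2 + (p - q) / 2 * Real.cos (Real.pi * t),
              s * Real.sin (Real.pi * t))
  continuous_toFun := by fun_prop
  source' := by simp; ring
  target' := by norm_num [Real.cos_pi, Real.sin_pi]; ring

lemma arc_fst (p q s : ℝ) (t : unitInterval) :
    (arc p q s t).1 = (p+q)/2 + (p-q)/2 * Real.cos (Real.pi * t) := rfl
lemma arc_snd (p q s : ℝ) (t : unitInterval) :
    (arc p q s t).2 = s * Real.sin (Real.pi * t) := rfl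

def onC (p q : ℝ) (z : ℝ × ℝ) : Prop :=
  (z.1 - (p+q)/2)^2 + z.2^2 = ((p-q)/2)^2

lemma onC_arc {p q s : ℝ} (hs : s^2 = ((p-q)/2)^2) (t : unitInterval) :
    onC p q (arc p q s t) := by
  have h := Real.sin_sq_add_cos_sq (Real.pi * t)
  simp only [onC, arc_fst, arc_snd]
  nlinarith [h, hs]

lemma mem_pi_interval (t : unitInterval) : 0 ≤ Real.pi * t ∧ Real.pi * t ≤ Real.pi :=
  ⟨mul_nonneg Real.pi_pos.le t.2.1, by nlinarith [t.2.2, Real.pi_pos]⟩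

lemma arc_snd_nonneg {p q s : ℝ} (hs : 0 ≤ s) (t : unitInterval) : 0 ≤ (arc p q s t).2 :=
  mul_nonneg hs (Real.sin_nonneg_of_nonneg_of_le_pi (mem_pi_interval t).1 (mem_pi_interval t).2)

lemma arc_snd_nonpos {p q s : ℝ} (hs : s ≤ 0) (t : unitInterval) : (arc p q s t).2 ≤ 0 :=
  mul_nonpos_of_nonpos_of_nonneg hs
    (Real.sin_nonneg_of_nonneg_of_le_pi (mem_pi_interval t).1 (mem_pi_interval t).2)

lemma arc_t01 {p q s : ℝ} (hs : s ≠ 0) {t : unitInterval} (h : (arc p q s t).2 = 0) :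
    t = 0 ∨ t = 1 := by
  rw [arc_snd] at h
  have hsin : Real.sin (Real.pi * t) = 0 := by
    rcases mul_eq_zero.mp h with h | h
    · exact absurd h hs
    · exact h
  by_contra hc
  push_neg at hc
  obtain ⟨h0, h1⟩ := hc
  have ht0 : 0 < (t : ℝ) := lt_of_le_of_ne t.2.1 (fun h => h0 (by ext; exact h.symm))
  have ht1 : (t : ℝ) < 1 := lt_of_le_of_ne t.2.2 (fun h => h1 (by ext; exact h))
  have := Real.sin_pos_of_pos_of_lt_pi (x := Real.pi * t)
    (by positivity) (by nlinarith [Real.pi_pos])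
  linarith [this, hsin.ge, hsin.le]

lemma arc_injective {p q : ℝ} (hpq : p ≠ q) (s : ℝ) : Function.Injective (arc p q s) := by
  intro a b hab
  have hx : ((arc p q s a).1 : ℝ) = (arc p q s b).1 := by rw [hab]
  rw [arc_fst, arc_fst] at hx
  have hr : (p - q)/2 ≠ 0 := by intro h; apply hpq; linarith
  have hcos : Real.cos (Real.pi * a) = Real.cos (Real.pi * b) := by
    have hm : (p - q) * (Real.cos (Real.pi * a) - Real.cos (Real.pi * b)) = 0 := by
      linear_combination 2 * hx
    rcases mul_eq_zero.mp hm with h | h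
    · exact absurd (by linarith : p = q) hpq
    · linarith
  have h2 : Real.pi * a = Real.pi * b := Real.injOn_cos
    ⟨(mem_pi_interval a).1, (mem_pi_interval a).2⟩
    ⟨(mem_pi_interval b).1, (mem_pi_interval b).2⟩ hcos
  exact Subtype.ext (mul_left_cancel₀ Real.pi_ne_zero h2)

lemma circle_two_pts {c c' r2 r2' x y x' y' : ℝ} (hcc : c ≠ c')
    (h1 : (x - c)^2 + y^2 = r2) (h2 : (x - c')^2 + y^2 = r2')
    (h3 : (x' - c)^2 + y'^2 = r2) (h4 : (x' - c')^2 + y'^2 = r2')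
    (hy : 0 ≤ y) (hy' : 0 ≤ y') : x = x' ∧ y = y' := by
  have key : 2*(c' - c)*(x - x') = 0 := by linear_combination h1 - h2 - h3 + h4
  have hx : x = x' := by
    rcases mul_eq_zero.mp key with h | h
    · exact absurd (by linarith : c = c') hcc
    · linarith
  subst hx
  have hy2 : (y - y') * (y + y') = 0 := by linear_combination h1 - h3
  refine ⟨rfl, ?_⟩
  rcases mul_eq_zero.mp hy2 with h | h
  · linarith
  · linarith

lemma nested_empty {c r c' r' x y : ℝ} (hr : 0 ≤ r)
    (h1 : (x - c)^2 + y^2 = r^2) (h2 : (x - c')^2 + y^2 = r'^2)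
    (hL : c' - r' < c - r) (hR : c + r < c' + r') : False := by
  have hx2 : (x - c)^2 ≤ r^2 := by nlinarith [sq_nonneg y]
  have h5 : x - c ≤ r := by nlinarith
  have h6 : -r ≤ x - c := by nlinarith
  have key : (x - c')^2 + r^2 - (x - c)^2 = r'^2 := by linarith
  rcases le_or_gt 0 (c - c') with hD | hD
  · nlinarith [mul_nonneg (by linarith : (0:ℝ) ≤ r - (x - c)) hD,
      mul_pos (by linarith : (0:ℝ) < (r' - r) - (c - c'))
        (by linarith : (0:ℝ) < 2*r + (c - c') + (r' - r))]
  · nlinarith [mul_nonneg (by linarith : (0:ℝ) ≤ (x - c) + r) (by linarith : (0:ℝ) ≤ c' - c),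
      mul_pos (by linarith : (0:ℝ) < (r' - r) - (c' - c))
        (by linarith : (0:ℝ) < 2*r + (c' - c) + (r' - r))]

lemma onC_axis {p q : ℝ} {z : ℝ × ℝ} (h : onC p q z) (h0 : z.2 = 0) :
    z.1 = p ∨ z.1 = q := by
  unfold onC at h
  rw [h0] at h
  have : (z.1 - p) * (z.1 - q) = 0 := by linear_combination h
  rcases mul_eq_zero.mp this with h | h
  · left; linarith
  · right; linarith

lemma trans_inj {X : Type*} [TopologicalSpace X] {x y z : X} (γ1 : Path x y) (γ2 : Path y z)
    (h1 : Function.Injective γ1) (h2 : Function.Injective γ2)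
    (hm : ∀ a b, γ1 a = γ2 b → a = 1 ∧ b = 0) :
    Function.Injective (γ1.trans γ2) := by
  intro a b hab
  rw [Path.trans_apply, Path.trans_apply] at hab
  split_ifs at hab with ha hb hb
  · have := Subtype.ext_iff.mp (h1 hab)
    exact Subtype.ext (by dsimp at this; linarith)
  · obtain ⟨hA, hB⟩ := hm _ _ hab
    have hA' : 2 * (a:ℝ) = 1 := by have := Subtype.ext_iff.mp hA; simpa using this
    have hB' : 2 * (b:ℝ) - 1 = 0 := by have := Subtype.ext_iff.mp hB; simpa using this
    exact absurd (by linarith : (b:ℝ) ≤ 1/2) hb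
  · obtain ⟨hA, hB⟩ := hm _ _ hab.symm
    have hA' : 2 * (b:ℝ) = 1 := by have := Subtype.ext_iff.mp hA; simpa using this
    have hB' : 2 * (a:ℝ) - 1 = 0 := by have := Subtype.ext_iff.mp hB; simpa using this
    exact absurd (by linarith : (a:ℝ) ≤ 1/2) ha
  · have := Subtype.ext_iff.mp (h2 hab)
    exact Subtype.ext (by dsimp at this; linarith)

noncomputable def edgePath (u v : ℝ) : Path ((u, 0) : ℝ × ℝ) ((v, 0) : ℝ × ℝ) :=
  (arc u (-(u+v)) ((2*u+v)/2)).trans (arc (-(u+v)) v (-((u+2*v)/2)))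

lemma edgePath_injective {u v : ℝ} (hu : 0 < u) (huv : u < v) :
    Function.Injective (edgePath u v) := by
  have hv0 : 0 < v := hu.trans huv
  apply trans_inj
  · exact arc_injective (by intro h; linarith) _
  · exact arc_injective (by intro h; linarith) _
  · intro a b hab
    have hs1 : (0:ℝ) < (2*u+v)/2 := by linarith
    have hs2 : (-((u+2*v)/2)) < 0 := by linarith
    have e := congrArg Prod.snd hab
    have n1 := arc_snd_nonneg (p := u) (q := -(u+v)) hs1.le a
    have n2 := arc_snd_nonpos (p := -(u+v)) (q := v) hs2.le b
    have hy1 : (arc u (-(u+v)) ((2*u+v)/2) a).2 = 0 := by linarith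
    have hy2 : (arc (-(u+v)) v (-((u+2*v)/2)) b).2 = 0 := by linarith
    have ha01 := arc_t01 (ne_of_gt hs1) hy1
    have hb01 := arc_t01 (ne_of_lt hs2) hy2
    rcases ha01 with rfl | rfl
    · exfalso
      rw [Path.source] at hab
      rcases hb01 with rfl | rfl
      · rw [Path.source] at hab
        have := congrArg Prod.fst hab; dsimp at this; linarith
      · rw [Path.target] at hab
        have := congrArg Prod.fst hab; dsimp at this; linarith
    · rcases hb01 with rfl | rfl
      · exact ⟨rfl, rfl⟩
      · exfalso
        rw [Path.target, Path.target] at hab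
        have := congrArg Prod.fst hab; dsimp at this; linarith

lemma mem_edgePath {u v : ℝ} (hu : 0 < u) (huv : u < v) {z : ℝ × ℝ}
    (hz : z ∈ Set.range (edgePath u v)) :
    (onC u (-(u+v)) z ∧ 0 ≤ z.2) ∨ (onC (-(u+v)) v z ∧ z.2 ≤ 0) := by
  have hv0 : 0 < v := hu.trans huv
  rw [edgePath, Path.trans_range] at hz
  rcases hz with ⟨t, rfl⟩ | ⟨t, rfl⟩
  · exact Or.inl ⟨onC_arc (by ring) t, arc_snd_nonneg (by linarith) t⟩
  · exact Or.inr ⟨onC_arc (by ring) t, arc_snd_nonpos (by linarith) t⟩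

lemma blocker_mem (u v : ℝ) : ((-(u+v), 0) : ℝ × ℝ) ∈ Set.range (edgePath u v) := by
  rw [edgePath, Path.trans_range]
  exact Or.inl ⟨1, (arc u (-(u+v)) ((2*u+v)/2)).target⟩

lemma key_le {u v u' v' : ℝ} (hu : 0 < u) (huv : u < v) (hu' : 0 < u') (huv' : u' < v')
    (hs : u + v ≤ u' + v') (hne : (u,v) ≠ (u',v')) :
    Set.Subsingleton (Set.range (edgePath u v) ∩ Set.range (edgePath u' v')) := by
  have hv0 : 0 < v := hu.trans huv
  have hv0' : 0 < v' := hu'.trans huv'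
  rcases eq_or_lt_of_le hs with hss | hss
  · -- equal sums
    have hneu : u ≠ u' := by
      intro h
      exact hne (by rw [Prod.ext_iff]; exact ⟨h, by linarith⟩)
    have hnev : v ≠ v' := fun h => hneu (by linarith)
    have H : ∀ x ∈ Set.range (edgePath u v) ∩ Set.range (edgePath u' v'),
        x = ((-(u+v), 0) : ℝ × ℝ) := by
      rintro x ⟨hx1, hx2⟩
      rcases mem_edgePath hu huv hx1 with ⟨hC1, hy1⟩ | ⟨hC1, hy1⟩ <;>
        rcases mem_edgePath hu' huv' hx2 with ⟨hC2, hy2⟩ | ⟨hC2, hy2⟩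
      · -- up/up
        have hb1 : ((-(u+v)) - (u + -(u+v))/2)^2 + (0:ℝ)^2 = ((u - -(u+v))/2)^2 := by ring
        have hb2 : ((-(u+v)) - (u' + -(u'+v'))/2)^2 + (0:ℝ)^2 = ((u' - -(u'+v'))/2)^2 := by
          rw [show -(u+v) = -(u'+v') by linarith]; ring
        have hcc : (u + -(u+v))/2 ≠ (u' + -(u'+v'))/2 := by
          intro h; apply hnev; linarith
        unfold onC at hC1 hC2
        obtain ⟨e1, e2⟩ := circle_two_pts hcc hC1 hC2 hb1 hb2 hy1 le_rfl
        exact Prod.ext_iff.mpr ⟨e1, e2⟩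
      · -- up/down
        have h0 : x.2 = 0 := le_antisymm hy2 hy1
        rcases onC_axis hC1 h0 with h|h
        · exfalso; rcases onC_axis hC2 h0 with h'|h' <;> linarith
        · exact Prod.ext_iff.mpr ⟨h, h0⟩
      · -- down/up
        have h0 : x.2 = 0 := le_antisymm hy1 hy2
        rcases onC_axis hC1 h0 with h|h
        · exact Prod.ext_iff.mpr ⟨h, h0⟩
        · exfalso; rcases onC_axis hC2 h0 with h'|h' <;> linarith
      · -- down/down
        have hb1 : ((-(u+v)) - (-(u+v) + v)/2)^2 + (-(0:ℝ))^2 = ((-(u+v) - v)/2)^2 := by ring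
        have hb2 : ((-(u+v)) - (-(u'+v') + v')/2)^2 + (-(0:ℝ))^2 = ((-(u'+v') - v')/2)^2 := by
          rw [show -(u+v) = -(u'+v') by linarith]; ring
        have hcc : (-(u+v) + v)/2 ≠ (-(u'+v') + v')/2 := by
          intro h; apply hneu; linarith
        unfold onC at hC1 hC2
        have hC1' : (x.1 - (-(u+v) + v)/2)^2 + (-x.2)^2 = ((-(u+v) - v)/2)^2 := by
          linear_combination hC1
        have hC2' : (x.1 - (-(u'+v') + v')/2)^2 + (-x.2)^2 = ((-(u'+v') - v')/2)^2 := by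
          linear_combination hC2
        obtain ⟨e1, e2⟩ := circle_two_pts hcc hC1' hC2' hb1 hb2
          (neg_nonneg.mpr hy1) (neg_nonneg.mpr le_rfl)
        exact Prod.ext_iff.mpr ⟨e1, by show x.2 = (0:ℝ); linarith⟩
    intro z hz w hw
    rw [H z hz, H w hw]
  · -- strict sums
    have hP1 : ∀ x : ℝ × ℝ, onC u (-(u+v)) x → onC u' (-(u'+v')) x → u' ≤ u := by
      intro x h1 h2
      by_contra hlt
      push_neg at hlt
      unfold onC at h1 h2
      exact nested_empty (by linarith : (0:ℝ) ≤ (u - -(u+v))/2) h1 h2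
        (by linarith) (by linarith)
    have hP4 : ∀ x : ℝ × ℝ, onC (-(u+v)) v x → onC (-(u'+v')) v' x → v' ≤ v := by
      intro x h1 h2
      by_contra hlt
      push_neg at hlt
      unfold onC at h1 h2
      have h1' : (x.1 - (-(u+v) + v)/2)^2 + x.2^2 = ((v - -(u+v))/2)^2 := by
        linear_combination h1
      have h2' : (x.1 - (-(u'+v') + v')/2)^2 + x.2^2 = ((v' - -(u'+v'))/2)^2 := by
        linear_combination h2
      exact nested_empty (by linarith : (0:ℝ) ≤ (v - -(u+v))/2) h1' h2'
        (by linarith) (by linarith)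
    have classify : ∀ x ∈ Set.range (edgePath u v) ∩ Set.range (edgePath u' v'),
        (onC u (-(u+v)) x ∧ onC u' (-(u'+v')) x ∧ 0 ≤ x.2) ∨
        (x = ((v, 0) : ℝ × ℝ) ∧ v = u') ∨
        (onC (-(u+v)) v x ∧ onC (-(u'+v')) v' x ∧ x.2 ≤ 0) := by
      rintro x ⟨hx1, hx2⟩
      rcases mem_edgePath hu huv hx1 with ⟨hC1, hy1⟩ | ⟨hC1, hy1⟩ <;>
        rcases mem_edgePath hu' huv' hx2 with ⟨hC2, hy2⟩ | ⟨hC2, hy2⟩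
      · exact Or.inl ⟨hC1, hC2, hy1⟩
      · exfalso
        have h0 : x.2 = 0 := le_antisymm hy2 hy1
        rcases onC_axis hC1 h0 with h|h <;> rcases onC_axis hC2 h0 with h'|h' <;> linarith
      · have h0 : x.2 = 0 := le_antisymm hy1 hy2
        rcases onC_axis hC1 h0 with h|h
        · exfalso; rcases onC_axis hC2 h0 with h'|h' <;> linarith
        · rcases onC_axis hC2 h0 with h'|h'
          · exact Or.inr (Or.inl ⟨Prod.ext_iff.mpr ⟨h, h0⟩, by linarith⟩)
          · exfalso; linarith
      · exact Or.inr (Or.inr ⟨hC1, hC2, hy2⟩)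
    intro z hz w hw
    rcases classify z hz with ⟨za, zb, zc⟩ | ⟨hz1, hvu⟩ | ⟨za, zb, zc⟩ <;>
      rcases classify w hw with ⟨wa, wb, wc⟩ | ⟨hw1, hvu2⟩ | ⟨wa, wb, wc⟩
    · -- P1 P1
      have huu := hP1 z za zb
      have hcc : (u + -(u+v))/2 ≠ (u' + -(u'+v'))/2 := by
        intro h
        have hvv : v = v' := by linarith
        linarith
      unfold onC at za zb wa wb
      obtain ⟨e1, e2⟩ := circle_two_pts hcc za zb wa wb zc wc
      exact Prod.ext_iff.mpr ⟨e1, e2⟩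
    · exfalso; have := hP1 z za zb; linarith
    · exfalso
      have h1 := hP1 z za zb
      have h2 := hP4 w wa wb
      linarith
    · exfalso; have := hP1 w wa wb; linarith
    · rw [hz1, hw1]
    · exfalso; have := hP4 w wa wb; linarith
    · exfalso
      have h1 := hP1 w wa wb
      have h2 := hP4 z za zb
      linarith
    · exfalso; have := hP4 z za zb; linarith
    · -- P4 P4
      have hvv := hP4 z za zb
      have hcc : (-(u+v) + v)/2 ≠ (-(u'+v') + v')/2 := by
        intro h
        have huu : u = u' := by linarith
        linarith
      unfold onC at za zb wa wb
      have za' : (z.1 - (-(u+v) + v)/2)^2 + (-z.2)^2 = ((-(u+v) - v)/2)^2 := by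
        linear_combination za
      have zb' : (z.1 - (-(u'+v') + v')/2)^2 + (-z.2)^2 = ((-(u'+v') - v')/2)^2 := by
        linear_combination zb
      have wa' : (w.1 - (-(u+v) + v)/2)^2 + (-w.2)^2 = ((-(u+v) - v)/2)^2 := by
        linear_combination wa
      have wb' : (w.1 - (-(u'+v') + v')/2)^2 + (-w.2)^2 = ((-(u'+v') - v')/2)^2 := by
        linear_combination wb
      obtain ⟨e1, e2⟩ := circle_two_pts hcc za' zb' wa' wb'
        (neg_nonneg.mpr zc) (neg_nonneg.mpr wc)
      exact Prod.ext_iff.mpr ⟨e1, by linarith⟩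

lemma key {u v u' v' : ℝ} (hu : 0 < u) (huv : u < v) (hu' : 0 < u') (huv' : u' < v')
    (hne : (u,v) ≠ (u',v')) :
    Set.Subsingleton (Set.range (edgePath u v) ∩ Set.range (edgePath u' v')) := by
  rcases le_total (u+v) (u'+v') with h | h
  · exact key_le hu huv hu' huv' h hne
  · rw [Set.inter_comm]
    exact key_le hu' huv' hu huv h (Ne.symm hne)

lemma edgePath_axis {u v : ℝ} (hu : 0 < u) (huv : u < v) {w : ℝ}
    (hw : 0 < w) (h : ((w, 0) : ℝ × ℝ) ∈ Set.range (edgePath u v)) : w = u ∨ w = v := by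
  have hv0 : 0 < v := hu.trans huv
  rcases mem_edgePath hu huv h with ⟨hC, _⟩ | ⟨hC, _⟩
  · rcases onC_axis hC rfl with h'|h'
    · exact Or.inl h'
    · exfalso; simp at h'; linarith
  · rcases onC_axis hC rfl with h'|h'
    · exfalso; simp at h'; linarith
    · exact Or.inr h'


/-- There is a simple (non-geometric) drawing of `K_n` blocked by `2n - 3` points:
vertex `v_i` at `(i, 0)` (`1 ≤ i ≤ n`), edge `v_i v_j` drawn as a simple curve through
`(-(i+j), 0)`, any two edges intersecting at most once, blocked by
`{(-k, 0) : 3 ≤ k ≤ 2n - 1}`. -/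
theorem simple_drawing_Kn_blocked (n : ℕ) (hn : 2 ≤ n)
    (v : Fin n → ℝ × ℝ) (hv : ∀ i : Fin n, v i = (((i : ℕ) : ℝ) + 1, 0))
    (B : Finset (ℝ × ℝ))
    (hBdef : B = (Finset.Icc 3 (2 * n - 1)).image (fun k : ℕ => ((-(k : ℝ)), (0 : ℝ)))) :
    ∃ γ : ∀ i j : Fin n, Path (v i) (v j),
      (∀ i j : Fin n, i < j → Function.Injective (γ i j)) ∧
      (∀ i j : Fin n, i < j → ∀ m : Fin n, m ≠ i → m ≠ j →
        v m ∉ Set.range (γ i j)) ∧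
      (∀ i j : Fin n, i < j →
        ((-(((i : ℕ) : ℝ) + ((j : ℕ) : ℝ) + 2)), (0 : ℝ)) ∈ Set.range (γ i j)) ∧
      (∀ i j i' j' : Fin n, i < j → i' < j' → (i, j) ≠ (i', j') →
        Set.Subsingleton (Set.range (γ i j) ∩ Set.range (γ i' j'))) ∧
      B.card = 2 * n - 3 ∧
      (∀ m : Fin n, v m ∉ B) ∧
      (∀ i j : Fin n, i < j → ∃ b ∈ B, b ∈ Set.range (γ i j)) := by
  have hpos : ∀ i : Fin n, (0:ℝ) < ((i:ℕ):ℝ) + 1 := fun i => by positivity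
  have hlt : ∀ i j : Fin n, i < j → ((i:ℕ):ℝ) + 1 < ((j:ℕ):ℝ) + 1 := by
    intro i j hij
    have : ((i:ℕ):ℝ) < ((j:ℕ):ℝ) := by exact_mod_cast hij
    linarith
  refine ⟨fun i j => (edgePath (((i:ℕ):ℝ)+1) (((j:ℕ):ℝ)+1)).cast (hv i) (hv j),
    ?_, ?_, ?_, ?_, ?_, ?_, ?_⟩
  · intro i j hij
    rw [Path.cast_coe]
    exact edgePath_injective (hpos i) (hlt i j hij)
  · intro i j hij m hmi hmj
    rw [Path.cast_coe, hv m]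
    intro hmem
    rcases edgePath_axis (hpos i) (hlt i j hij) (hpos m) hmem with h | h
    · exact hmi (Fin.ext (by exact_mod_cast (by linarith : ((m:ℕ):ℝ) = ((i:ℕ):ℝ))))
    · exact hmj (Fin.ext (by exact_mod_cast (by linarith : ((m:ℕ):ℝ) = ((j:ℕ):ℝ))))
  · intro i j hij
    rw [Path.cast_coe]
    have : (-(((i:ℕ):ℝ) + ((j:ℕ):ℝ) + 2), (0:ℝ)) =
        ((-((((i:ℕ):ℝ)+1) + (((j:ℕ):ℝ)+1))), (0:ℝ)) := by norm_num; ring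
    rw [this]
    exact blocker_mem _ _
  · intro i j i' j' hij hij' hne
    rw [Path.cast_coe, Path.cast_coe]
    apply key (hpos i) (hlt i j hij) (hpos i') (hlt i' j' hij')
    intro h
    rw [Prod.ext_iff] at h
    obtain ⟨h1, h2⟩ := h
    dsimp only at h1 h2
    apply hne
    rw [Prod.ext_iff]
    constructor
    · exact Fin.ext (by exact_mod_cast (by linarith : ((i:ℕ):ℝ) = ((i':ℕ):ℝ)))
    · exact Fin.ext (by exact_mod_cast (by linarith : ((j:ℕ):ℝ) = ((j':ℕ):ℝ)))
  · subst hBdef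
    rw [Finset.card_image_of_injective]
    · rw [Nat.card_Icc]; omega
    · intro a b hab
      rw [Prod.ext_iff] at hab
      have : ((a:ℝ)) = (b:ℝ) := by have := hab.1; simpa using this
      exact_mod_cast this
  · intro m
    subst hBdef
    rw [hv m]
    intro hmem
    rw [Finset.mem_image] at hmem
    obtain ⟨k, hk, heq⟩ := hmem
    rw [Finset.mem_Icc] at hk
    have h3 : (3:ℝ) ≤ (k:ℝ) := by exact_mod_cast hk.1
    rw [Prod.ext_iff] at heq
    have := heq.1
    simp at this
    have hm0 : (0:ℝ) ≤ ((m:ℕ):ℝ) := by positivity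
    linarith
  · intro i j hij
    subst hBdef
    refine ⟨(-((((i:ℕ)+(j:ℕ)+2 : ℕ)):ℝ), 0), ?_, ?_⟩
    · rw [Finset.mem_image]
      refine ⟨(i:ℕ)+(j:ℕ)+2, ?_, rfl⟩
      rw [Finset.mem_Icc]
      have hi := i.isLt
      have hj := j.isLt
      have hij' : (i:ℕ) < (j:ℕ) := hij
      omega
    · rw [Path.cast_coe]
      have : ((-((((i:ℕ)+(j:ℕ)+2 : ℕ)):ℝ), (0:ℝ)) : ℝ × ℝ) =
          ((-((((i:ℕ):ℝ)+1) + (((j:ℕ):ℝ)+1))), (0:ℝ)) := by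
        push_cast; norm_num; ring
      rw [this]
      exact blocker_mem _ _
end
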